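/- Let F : ℝ^n → ℝ^n be continuously differentiable and quadratic (F(x) = Q(x,x) + L(x) + c with Q symmetric bilinear, L linear), let V ⊆ ℝ^n be bounded, open, convex, with DF invertible everywhere on V, and let S ⊆ ℝ^n be connected with F(V) ∩ S nonempty and F(∂V) ∩ S empty. Then for every s ∈ S there exists a unique v ∈ V with F(v) = s. -/

import Mathlib

/-- Existence and uniqueness of load-flow solutions: for a `C¹` quadratic map `F`
with `V` bounded, open, convex and non-singular, and `S` connected with
`F(V) ∩ S ≠ ∅` and `F(∂V) ∩ S = ∅`, every `s ∈ S` has a unique preimage in `V`. -/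
theorem existsUnique_preimage_quadratic
    {n : ℕ} (Q : (Fin n → ℝ) →ₗ[ℝ] (Fin n → ℝ) →ₗ[ℝ] (Fin n → ℝ))
    (hQ : ∀ x y, Q x y = Q y x)
    (L : (Fin n → ℝ) →ₗ[ℝ] (Fin n → ℝ)) (c : Fin n → ℝ)
    (F : (Fin n → ℝ) → (Fin n → ℝ)) (hFc : ContDiff ℝ 1 F)
    (hF : ∀ x, F x = Q x x + L x + c)
    (V : Set (Fin n → ℝ)) (hVb : Bornology.IsBounded V) (hVo : IsOpen V)
    (hVc : Convex ℝ V)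
    (hJ : ∀ v ∈ V, Function.Bijective (fderiv ℝ F v))
    (S : Set (Fin n → ℝ)) (hS : IsPreconnected S)
    (hne : (F '' V ∩ S).Nonempty)
    (hfr : F '' (frontier V) ∩ S = ∅) :
    ∀ s ∈ S, ∃! v, v ∈ V ∧ F v = s := by
  -- Uniqueness lemma
  have uniq : ∀ a ∈ V, ∀ b ∈ V, F a = F b → a = b := by
    intro a ha b hb hab
    by_contra hne'
    set m : Fin n → ℝ := (1/2 : ℝ) • a + (1/2 : ℝ) • b with hm_def
    have hm : m ∈ V := hVc ha hb (by norm_num) (by norm_num) (by norm_num)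
    set d : Fin n → ℝ := (1/2 : ℝ) • (b - a) with hd_def
    have hd0 : d ≠ 0 := by
      intro h
      apply hne'
      have : b - a = 0 := by
        have := congrArg (fun x => (2 : ℝ) • x) h
        simpa [hd_def, smul_smul] using this
      exact (sub_eq_zero.mp this).symm
    set u : Fin n → ℝ := (2 : ℝ) • Q m d + L d with hu_def
    -- the function t ↦ F (m + t • d) written explicitly
    have hg : (fun t : ℝ => F (m + t • d)) =
        fun t : ℝ => F m + t • u + (t * t) • (Q d d) := by
      funext t
      simp only [hF, map_add, map_smul, LinearMap.add_apply, LinearMap.smul_apply, hu_def]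
      rw [hQ d m]
      module
    -- u = 0 since F a = F b
    have hba : F b - F a = (2 : ℝ) • u := by
      have hbm : b = m + d := by rw [hm_def, hd_def]; module
      have ham : a = m - d := by rw [hm_def, hd_def]; module
      rw [hbm, ham]
      simp only [hF, sub_eq_iff_eq_add]
      simp only [map_add, map_sub, map_smul, LinearMap.add_apply, LinearMap.sub_apply,
        LinearMap.smul_apply, hu_def]
      rw [hQ d m]
      module
    have hu0 : u = 0 := by
      have h2u : (2 : ℝ) • u = 0 := by rw [← hba, hab, sub_self]
      have := congrArg (fun x => (1/2 : ℝ) • x) h2u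
      simpa [smul_smul] using this
    -- derivative computations
    have hdiff : DifferentiableAt ℝ F m := (hFc.differentiable one_ne_zero).differentiableAt
    have hline : HasDerivAt (fun t : ℝ => m + t • d) d 0 := by
      simpa using ((hasDerivAt_id (0 : ℝ)).smul_const d).const_add m
    have hchain : HasDerivAt (fun t : ℝ => F (m + t • d)) (fderiv ℝ F m d) 0 := by
      have hF' : HasFDerivAt F (fderiv ℝ F m) ((fun t : ℝ => m + t • d) 0) := by
        simpa using hdiff.hasFDerivAt
      have := hF'.comp_hasDerivAt (0 : ℝ) hline
      exact this
    have hpoly : HasDerivAt (fun t : ℝ => F m + t • u + (t * t) • (Q d d)) u 0 := by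
      have h1 : HasDerivAt (fun t : ℝ => t • u) u 0 := by
        simpa using (hasDerivAt_id (0 : ℝ)).smul_const u
      have h2 : HasDerivAt (fun t : ℝ => (t * t) • (Q d d)) (0 : Fin n → ℝ) 0 := by
        simpa using ((hasDerivAt_id (0 : ℝ)).mul (hasDerivAt_id (0 : ℝ))).smul_const (Q d d)
      have := ((hasDerivAt_const (0 : ℝ) (F m)).add h1).add h2
      rw [zero_add, add_zero] at this
      exact this
    have hderiv : fderiv ℝ F m d = u := by
      have := hchain
      rw [hg] at this
      exact this.unique hpoly
    have : d = 0 := by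
      apply (hJ m hm).1
      rw [hderiv, hu0, map_zero]
    exact hd0 this
  -- F '' V is open
  have hopen : IsOpen (F '' V) := by
    rw [isOpen_iff_mem_nhds]
    rintro y ⟨v, hv, rfl⟩
    have hbij := hJ v hv
    let e : (Fin n → ℝ) ≃ₗ[ℝ] (Fin n → ℝ) :=
      LinearEquiv.ofBijective (fderiv ℝ F v).toLinearMap hbij
    let e' : (Fin n → ℝ) ≃L[ℝ] (Fin n → ℝ) := e.toContinuousLinearEquiv
    have hcoe : (e' : (Fin n → ℝ) →L[ℝ] (Fin n → ℝ)) = fderiv ℝ F v :=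
      ContinuousLinearMap.ext fun x => rfl
    have hstrict : HasStrictFDerivAt F (e' : (Fin n → ℝ) →L[ℝ] (Fin n → ℝ)) v := by
      rw [hcoe]
      exact (hFc.contDiffAt.hasStrictFDerivAt one_ne_zero)
    have hmap : Filter.map F (nhds v) = nhds (F v) := hstrict.map_nhds_eq_of_equiv
    have : F '' V ∈ Filter.map F (nhds v) := by
      refine Filter.mem_map.mpr (Filter.mem_of_superset (hVo.mem_nhds hv) ?_)
      intro x hx
      exact Set.mem_image_of_mem F hx
    rwa [hmap] at this
  -- F '' closure V is compact hence closed
  have hcl : IsCompact (closure V) := hVb.isCompact_closure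
  have hclosed : IsClosed (F '' closure V) :=
    (hcl.image (hFc.continuous)).isClosed
  -- existence
  intro s hs
  have hex : s ∈ F '' V := by
    by_contra hsnot
    have hcover : S ⊆ F '' V ∪ (F '' closure V)ᶜ := by
      intro x hx
      by_cases hxc : x ∈ F '' closure V
      · left
        obtain ⟨w, hw, rfl⟩ := hxc
        rw [closure_eq_self_union_frontier] at hw
        rcases hw with hw | hw
        · exact Set.mem_image_of_mem F hw
        · exact absurd (Set.mem_inter (Set.mem_image_of_mem F hw) hx)
            (by rw [hfr]; exact fun h => h)
      · right; exact hxc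
    have hn1 : (S ∩ F '' V).Nonempty := by
      obtain ⟨y, hy1, hy2⟩ := hne
      exact ⟨y, hy2, hy1⟩
    have hn2 : (S ∩ (F '' closure V)ᶜ).Nonempty := by
      refine ⟨s, hs, fun hc => hsnot ?_⟩
      obtain ⟨w, hw, rfl⟩ := hc
      rw [closure_eq_self_union_frontier] at hw
      rcases hw with hw | hw
      · exact Set.mem_image_of_mem F hw
      · exact absurd (Set.mem_inter (Set.mem_image_of_mem F hw) hs)
          (by rw [hfr]; exact fun h => h)
    obtain ⟨y, _, hy1, hy2⟩ := hS _ _ hopen hclosed.isOpen_compl hcover hn1 hn2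
    exact hy2 (Set.image_mono subset_closure hy1)
  obtain ⟨v, hv, hfv⟩ := hex
  exact ⟨v, ⟨hv, hfv⟩, fun y ⟨hy, hfy⟩ => uniq y hy v hv (by rw [hfy, hfv])⟩
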